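/- Let p_n(x,t) = K_{n,d,h}·(c²t² − ‖x‖²)^{(n/2)(d−h)−1}/(ct)^{(n+1)(d−h)+h−2} with normalizing constant K_{n,d,h} = Γ((n+1)(d−h)/2 + h/2)/(π^{d/2}·Γ(n(d−h)/2)), for ‖x‖ < ct, and 0 otherwise. Then ∫_{ℝ^d} p_n(x,t) dx = 1, i.e., p_n is a probability density on the ball of radius ct; equivalently, ‖X‖²/(c²t²) has a Beta(d/2, n(d−h)/2) distribution when X has density p_n. -/

import Mathlib

open MeasureTheory Set intervalIntegral Real

lemma betaIntegrableOn {a b : ℝ} (ha : 0 < a) (hb : 0 < b) :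
    IntegrableOn (fun x : ℝ => x ^ (a - 1) * (1 - x) ^ (b - 1)) (Ioc 0 1) volume := by
  have hC : IntervalIntegrable
      (fun x : ℝ => (x : ℂ) ^ ((a : ℂ) - 1) * (1 - (x : ℂ)) ^ ((b : ℂ) - 1)) volume 0 1 :=
    Complex.betaIntegral_convergent (by simpa using ha) (by simpa using hb)
  have h1 : IntegrableOn
      (fun x : ℝ => (x : ℂ) ^ ((a : ℂ) - 1) * (1 - (x : ℂ)) ^ ((b : ℂ) - 1)) (Ioc 0 1) volume :=
    hC.1
  have h2 := h1.re
  refine IntegrableOn.congr_fun (h2 : IntegrableOn _ _ _) (fun x hx => ?_) measurableSet_Ioc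
  have hx0 : (0:ℝ) ≤ x := le_of_lt hx.1
  have hx1 : (0:ℝ) ≤ 1 - x := by linarith [hx.2]
  have e1 : ((x : ℂ) ^ ((a : ℂ) - 1)) = ((x ^ (a - 1) : ℝ) : ℂ) := by
    rw [Complex.ofReal_cpow hx0]; push_cast; ring_nf
  have e2 : ((1 - (x : ℂ)) ^ ((b : ℂ) - 1)) = (((1 - x) ^ (b - 1) : ℝ) : ℂ) := by
    rw [Complex.ofReal_cpow hx1]; push_cast; ring_nf
  simp [e1, e2, ← Complex.ofReal_mul]

lemma betaRealEval {a b : ℝ} (ha : 0 < a) (hb : 0 < b) :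
    ∫ x in (0:ℝ)..1, x ^ (a - 1) * (1 - x) ^ (b - 1)
      = Real.Gamma a * Real.Gamma b / Real.Gamma (a + b) := by
  have key := Complex.Gamma_mul_Gamma_eq_betaIntegral
    (s := (a : ℂ)) (t := (b : ℂ)) (by simpa using ha) (by simpa using hb)
  have hBeta : Complex.betaIntegral (a : ℂ) (b : ℂ)
      = ((∫ x in (0:ℝ)..1, x ^ (a - 1) * (1 - x) ^ (b - 1) : ℝ) : ℂ) := by
    rw [Complex.betaIntegral, ← intervalIntegral.integral_ofReal]
    refine intervalIntegral.integral_congr (fun x hx => ?_)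
    rw [uIcc_of_le (by norm_num : (0:ℝ) ≤ 1)] at hx
    have hx0 : (0:ℝ) ≤ x := hx.1
    have hx1 : (0:ℝ) ≤ 1 - x := by linarith [hx.2]
    have e1 : ((x : ℂ) ^ ((a : ℂ) - 1)) = ((x ^ (a - 1) : ℝ) : ℂ) := by
      rw [Complex.ofReal_cpow hx0]; push_cast; ring_nf
    have e2 : ((1 - (x : ℂ)) ^ ((b : ℂ) - 1)) = (((1 - x) ^ (b - 1) : ℝ) : ℂ) := by
      rw [Complex.ofReal_cpow hx1]; push_cast; ring_nf
    simp [e1, e2, ← Complex.ofReal_mul]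
  rw [hBeta, ← Complex.ofReal_add, Complex.Gamma_ofReal, Complex.Gamma_ofReal,
    Complex.Gamma_ofReal, ← Complex.ofReal_mul, ← Complex.ofReal_mul] at key
  have := Complex.ofReal_inj.mp key
  have hG : Real.Gamma (a + b) ≠ 0 := (Real.Gamma_pos_of_pos (by linarith)).ne'
  field_simp
  linarith [this]

lemma gIntegrableOn {s : ℝ} (hs : 0 < s) (d : ℕ) :
    IntegrableOn (fun x : ℝ => x ^ (d - 1) * (1 - x ^ 2) ^ (s - 1)) (Icc 0 1) volume := by
  have hdom : IntegrableOn
      (fun x : ℝ => (2 ^ (s-1) + 1) * (x ^ ((1:ℝ) - 1) * (1 - x) ^ (s - 1))) (Icc 0 1) volume := by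
    refine IntegrableOn.congr_set_ae ?_ (Ioc_ae_eq_Icc (a := (0:ℝ)) (b := 1)).symm
    exact (betaIntegrableOn one_pos hs).const_mul _
  refine Integrable.mono' hdom ?_ ?_
  · refine Measurable.aestronglyMeasurable ?_
    have m1 : Measurable (fun y : ℝ => y ^ (s - 1)) := by
      refine measurable_of_continuousOn_compl_singleton 0 ?_
      exact fun y hy => (Real.continuousAt_rpow_const y (s-1) (Or.inl hy)).continuousWithinAt
    exact (measurable_id.pow_const (d-1)).mul
      (m1.comp (measurable_const.sub (measurable_id.pow_const 2)))
  · refine Filter.eventually_of_mem (self_mem_ae_restrict measurableSet_Icc) (fun x hx => ?_)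
    have hx0 : (0:ℝ) ≤ x := hx.1
    have hx1 : x ≤ 1 := hx.2
    have h1x : (0:ℝ) ≤ 1 - x := by linarith
    have h1x2 : (0:ℝ) ≤ 1 - x ^ 2 := by nlinarith
    have hsplit : (1 - x ^ 2) ^ (s - 1) = (1 - x) ^ (s-1) * (1 + x) ^ (s-1) := by
      rw [← Real.mul_rpow h1x (by linarith)]; ring_nf
    have hpow : x ^ (d - 1) ≤ 1 := pow_le_one₀ hx0 hx1
    have hbound : (1 + x) ^ (s - 1) ≤ 2 ^ (s-1) + 1 := by
      rcases le_or_gt 0 (s - 1) with hcase | hcase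
      · have := Real.rpow_le_rpow (by linarith) (by linarith : 1 + x ≤ 2) hcase
        linarith
      · have := Real.rpow_le_one_of_one_le_of_nonpos (by linarith : (1:ℝ) ≤ 1 + x) hcase.le
        have h2 : (0:ℝ) ≤ 2 ^ (s-1) := Real.rpow_nonneg (by norm_num) _
        linarith
    have hnn : 0 ≤ x ^ (d - 1) * (1 - x ^ 2) ^ (s - 1) := by positivity
    rw [Real.norm_of_nonneg hnn, hsplit, sub_self, Real.rpow_zero]
    calc x ^ (d-1) * ((1-x) ^ (s-1) * (1+x) ^ (s-1))
        ≤ 1 * ((1-x) ^ (s-1) * (1+x) ^ (s-1)) := by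
          apply mul_le_mul_of_nonneg_right hpow (by positivity)
      _ = (1-x) ^ (s-1) * (1+x) ^ (s-1) := one_mul _
      _ ≤ (1-x) ^ (s-1) * (2 ^ (s-1) + 1) := mul_le_mul_of_nonneg_left hbound (by positivity)
      _ = (2 ^ (s-1) + 1) * (1 * (1-x) ^ (s-1)) := by ring

lemma halfBeta {s : ℝ} (hs : 0 < s) {d : ℕ} (hd : 2 ≤ d) :
    ∫ x in (0:ℝ)..1, x ^ (d - 1) * (1 - x ^ 2) ^ (s - 1)
      = (1/2) * (Real.Gamma ((d:ℝ)/2) * Real.Gamma s / Real.Gamma ((d:ℝ)/2 + s)) := by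
  set g : ℝ → ℝ := fun x => x ^ (d - 1) * (1 - x ^ 2) ^ (s - 1) with hg
  -- pointwise identity on Ioc 0 1
  have hpt : ∀ u ∈ Ioc (0:ℝ) 1,
      (1 / (2 * Real.sqrt u)) • g (Real.sqrt u)
        = (1/2) * (u ^ ((d:ℝ)/2 - 1) * (1 - u) ^ (s - 1)) := by
    intro u hu
    have hu0 : 0 < u := hu.1
    have hsq : Real.sqrt u = u ^ ((1:ℝ)/2) := Real.sqrt_eq_rpow u
    have h1 : (Real.sqrt u) ^ 2 = u := Real.sq_sqrt hu0.le
    have h2 : (Real.sqrt u) ^ (d - 1) = u ^ (((d:ℝ) - 1) / 2) := by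
      rw [hsq, ← Real.rpow_natCast (u ^ ((1:ℝ)/2)) (d-1), ← Real.rpow_mul hu0.le]
      congr 1
      rw [Nat.cast_sub (by omega : 1 ≤ d)]
      push_cast; ring
    have h3 : (1:ℝ) / (2 * Real.sqrt u) = (1/2) * u ^ (-((1:ℝ)/2)) := by
      rw [hsq, Real.rpow_neg hu0.le]
      field_simp
    rw [hg]
    simp only [smul_eq_mul, h1, h2, h3]
    rw [show (1/2 : ℝ) * u ^ (-((1:ℝ)/2)) * (u ^ (((d:ℝ) - 1) / 2) * (1-u) ^ (s-1))
        = (1/2) * ((u ^ (-((1:ℝ)/2)) * u ^ (((d:ℝ) - 1) / 2)) * (1-u) ^ (s-1)) by ring,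
      ← Real.rpow_add hu0]
    ring_nf
  have key := intervalIntegral.integral_comp_smul_deriv''' (a := (0:ℝ)) (b := 1)
      (f := Real.sqrt) (f' := fun u => 1 / (2 * Real.sqrt u)) (g := g)
      (Real.continuous_sqrt.continuousOn)
      (by
        intro x hx
        have hx' : x ∈ Ioo (0:ℝ) 1 := by simpa using hx
        exact (Real.hasDerivAt_sqrt hx'.1.ne').hasDerivWithinAt)
      (by
        intro y hy
        obtain ⟨u, hu, rfl⟩ := hy
        have hu' : u ∈ Ioo (0:ℝ) 1 := by simpa using hu
        have h0 : 0 < Real.sqrt u := Real.sqrt_pos.mpr hu'.1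
        have h1 : Real.sqrt u < 1 := by
          rw [show (1:ℝ) = Real.sqrt 1 by simp]
          exact Real.sqrt_lt_sqrt hu'.1.le hu'.2
        have hc : ContinuousAt g (Real.sqrt u) := by
          refine (continuousAt_pow _ _).mul ?_
          refine ContinuousAt.rpow_const ?_ (Or.inl ?_)
          · exact (continuous_const.sub (continuous_pow 2)).continuousAt
          · nlinarith [Real.sq_sqrt hu'.1.le]
        exact hc.continuousWithinAt)
      (by
        refine (gIntegrableOn hs d).mono_set ?_
        rintro y ⟨u, hu, rfl⟩
        rw [uIcc_of_le (by norm_num : (0:ℝ) ≤ 1)] at hu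
        exact ⟨Real.sqrt_nonneg u, Real.sqrt_le_one.mpr hu.2⟩)
      (by
        have hb : IntegrableOn
            (fun u : ℝ => (1/2) * (u ^ ((d:ℝ)/2 - 1) * (1 - u) ^ (s - 1))) (Ioc 0 1) volume := by
          have := (betaIntegrableOn (a := (d:ℝ)/2) (by positivity) hs).const_mul (1/2 : ℝ)
          exact this
        have h2 : IntegrableOn
            (fun u : ℝ => (1 / (2 * Real.sqrt u)) • (g ∘ Real.sqrt) u) (Ioc 0 1) volume := by
          refine hb.congr_fun (fun u hu => ?_) measurableSet_Ioc
          exact (hpt u hu).symm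
        rw [uIcc_of_le (by norm_num : (0:ℝ) ≤ 1)]
        exact h2.congr_set_ae (Ioc_ae_eq_Icc (a := (0:ℝ)) (b := 1)).symm)
  rw [Real.sqrt_zero, Real.sqrt_one] at key
  rw [← key]
  have e1 : ∫ u in (0:ℝ)..1, (1 / (2 * Real.sqrt u)) • (g ∘ Real.sqrt) u
      = ∫ u in (0:ℝ)..1, (1/2) * (u ^ ((d:ℝ)/2 - 1) * (1 - u) ^ (s - 1)) := by
    rw [intervalIntegral.integral_of_le (by norm_num : (0:ℝ) ≤ 1),
        intervalIntegral.integral_of_le (by norm_num : (0:ℝ) ≤ 1)]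
    exact setIntegral_congr_fun measurableSet_Ioc (fun u hu => hpt u hu)
  rw [e1, intervalIntegral.integral_const_mul,
    betaRealEval (a := (d:ℝ)/2) (by positivity) hs]

theorem dirichlet_random_flight_density_integrates_to_one
    (d h n : ℕ) (hd : 2 ≤ d) (hh : h = 1 ∨ h = 2) (hdh : h < d) (hn : 1 ≤ n)
    (c t : ℝ) (hc : 0 < c) (ht : 0 < t)
    (p : EuclideanSpace ℝ (Fin d) → ℝ)
    (hp : ∀ x, p x =
      if ‖x‖ < c * t then
        (Real.Gamma (((n + 1 : ℝ) * ((d : ℝ) - h)) / 2 + (h : ℝ) / 2) /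
          (Real.pi ^ ((d : ℝ) / 2) * Real.Gamma (((n : ℝ) * ((d : ℝ) - h)) / 2))) *
        (c ^ 2 * t ^ 2 - ‖x‖ ^ 2) ^ (((n : ℝ) * ((d : ℝ) - h)) / 2 - 1) /
        (c * t) ^ ((n + 1 : ℝ) * ((d : ℝ) - h) + (h : ℝ) - 2)
      else 0) :
    ∫ x : EuclideanSpace ℝ (Fin d), p x = 1 := by
  haveI : NeZero d := ⟨by omega⟩
  have hR : 0 < c * t := mul_pos hc ht
  set D : ℝ := (d : ℝ) with hD
  set H : ℝ := (h : ℝ) with hH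
  have hDH : 0 < D - H := by
    rw [hD, hH]; rw [sub_pos]; exact_mod_cast hdh
  set s : ℝ := ((n : ℝ) * (D - H)) / 2 with hs_def
  have hs : 0 < s := by
    rw [hs_def]
    have : (1:ℝ) ≤ (n:ℝ) := by exact_mod_cast hn
    positivity
  set P : ℝ := (n + 1 : ℝ) * (D - H) + H - 2 with hP
  set K : ℝ := Real.Gamma (((n + 1 : ℝ) * (D - H)) / 2 + H / 2) /
      (Real.pi ^ (D / 2) * Real.Gamma s) with hK
  set f : ℝ → ℝ := fun y =>
    if y < c * t then K * (c ^ 2 * t ^ 2 - y ^ 2) ^ (s - 1) / (c * t) ^ P else 0 with hf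
  have hpf : p = fun x => f ‖x‖ := by
    funext x; rw [hp x]
  set G : ℝ → ℝ := fun y =>
    y ^ (d - 1) * (K * (c ^ 2 * t ^ 2 - y ^ 2) ^ (s - 1) / (c * t) ^ P) with hG
  -- Step 1: polar coordinates
  haveI : Nontrivial (EuclideanSpace ℝ (Fin d)) := inferInstance
  rw [hpf, MeasureTheory.integral_fun_norm_addHaar (volume) f]
  simp only [finrank_euclideanSpace_fin]
  -- Step 2: Ioi → Ioo
  have step1 : ∫ y in Ioi (0:ℝ), y ^ (d - 1) • f y = ∫ y in Ioo (0:ℝ) (c*t), G y := by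
    rw [← MeasureTheory.integral_indicator measurableSet_Ioi, ← MeasureTheory.integral_indicator measurableSet_Ioo]
    congr 1; funext y
    by_cases hy : y ∈ Ioi (0:ℝ)
    · rw [indicator_of_mem hy]
      by_cases hy2 : y < c * t
      · rw [indicator_of_mem (show y ∈ Ioo 0 (c*t) from ⟨hy, hy2⟩), hf, hG]
        simp [hy2, smul_eq_mul]
      · rw [indicator_of_notMem (fun hmem => hy2 hmem.2), hf]
        simp [hy2]
    · rw [indicator_of_notMem hy, indicator_of_notMem (fun hmem => hy (mem_Ioi.mpr hmem.1))]
  rw [step1]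
  -- Step 3: Ioo → interval integral
  have step2 : ∫ y in Ioo (0:ℝ) (c*t), G y = ∫ y in (0:ℝ)..(c*t), G y := by
    rw [intervalIntegral.integral_of_le hR.le, Measure.restrict_congr_set Ioo_ae_eq_Ioc]
  rw [step2]
  -- Step 4: scaling
  have step3 : ∫ x in (0:ℝ)..1, G ((c*t) * x) = (c*t)⁻¹ • ∫ y in (0:ℝ)..(c*t), G y := by
    have := intervalIntegral.integral_comp_mul_left (a := (0:ℝ)) (b := 1) G hR.ne'
    simpa using this
  have step3' : ∫ y in (0:ℝ)..(c*t), G y = (c*t) * ∫ x in (0:ℝ)..1, G ((c*t) * x) := by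
    rw [step3, smul_eq_mul, ← mul_assoc, mul_inv_cancel₀ hR.ne', one_mul]
  rw [step3']
  -- Step 5: simplify the scaled integrand
  set A : ℝ := (c*t) ^ (d - 1) * (c ^ 2 * t ^ 2) ^ (s - 1) / (c * t) ^ P with hA
  have step4 : ∫ x in (0:ℝ)..1, G ((c*t) * x)
      = (K * A) * ∫ x in (0:ℝ)..1, x ^ (d - 1) * (1 - x ^ 2) ^ (s - 1) := by
    rw [← intervalIntegral.integral_const_mul]
    refine intervalIntegral.integral_congr (fun x hx => ?_)
    rw [uIcc_of_le (by norm_num : (0:ℝ) ≤ 1)] at hx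
    have hx2 : (0:ℝ) ≤ 1 - x ^ 2 := by nlinarith [hx.1, hx.2]
    rw [hG]
    simp only
    rw [mul_pow, show c ^ 2 * t ^ 2 - ((c*t) * x) ^ 2 = (c ^ 2 * t ^ 2) * (1 - x ^ 2) by ring,
      Real.mul_rpow (by positivity) hx2, hA]
    ring
  rw [step4]
  -- Step 6: (c*t) * A = 1
  have hAval : (c*t) * A = 1 := by
    rw [hA]
    have e1 : (c*t) ^ (d - 1) = (c*t) ^ (D - 1) := by
      rw [← Real.rpow_natCast (c*t) (d-1), Nat.cast_sub (by omega : 1 ≤ d), Nat.cast_one, hD]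
    have e2 : (c ^ 2 * t ^ 2) ^ (s - 1) = (c*t) ^ (2 * (s - 1)) := by
      rw [show c ^ 2 * t ^ 2 = (c*t) ^ ((2:ℕ):ℝ) by rw [Real.rpow_natCast]; ring,
        ← Real.rpow_mul hR.le]
      norm_num
    rw [e1, e2, div_eq_mul_inv, ← Real.rpow_neg hR.le,
      show (c*t) * ((c*t) ^ (D-1) * (c*t) ^ (2*(s-1)) * (c*t) ^ (-P))
        = (c*t) ^ (1:ℝ) * (c*t) ^ (D-1) * (c*t) ^ (2*(s-1)) * (c*t) ^ (-P) by
          rw [Real.rpow_one]; ring,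
      ← Real.rpow_add hR, ← Real.rpow_add hR, ← Real.rpow_add hR]
    rw [show (1:ℝ) + (D-1) + 2*(s-1) + (-P) = 0 by rw [hs_def, hP]; ring]
    exact Real.rpow_zero _
  -- Step 7: evaluate the beta integral
  rw [halfBeta hs hd]
  -- Step 8: volume of the unit ball
  have hvol : (volume (Metric.ball (0 : EuclideanSpace ℝ (Fin d)) 1)).toReal
      = Real.pi ^ (D / 2) / Real.Gamma (D / 2 + 1) := by
    rw [EuclideanSpace.volume_ball]
    simp only [Fintype.card_fin, ENNReal.ofReal_one, one_pow, one_mul]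
    rw [ENNReal.toReal_ofReal (by positivity)]
    congr 1
    rw [Real.sqrt_eq_rpow, ← Real.rpow_natCast (Real.pi ^ ((1:ℝ)/2)) d, ← Real.rpow_mul Real.pi_pos.le]
    rw [hD]; congr 1; ring
  rw [measureReal_def, hvol]
  -- Step 9: final arithmetic
  have hGs : 0 < Real.Gamma s := Real.Gamma_pos_of_pos hs
  have hGD : 0 < Real.Gamma (D/2) := Real.Gamma_pos_of_pos (by rw [hD]; positivity)
  have hGDs : 0 < Real.Gamma (D/2 + s) := Real.Gamma_pos_of_pos (by rw [hD]; positivity)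
  have hpi : (0:ℝ) < Real.pi ^ (D/2) := Real.rpow_pos_of_pos Real.pi_pos _
  have hKnum : ((n + 1 : ℝ) * (D - H)) / 2 + H / 2 = D / 2 + s := by rw [hs_def]; ring
  have hGone : Real.Gamma (D/2 + 1) = (D/2) * Real.Gamma (D/2) := by
    refine Real.Gamma_add_one ?_
    rw [hD]; positivity
  rw [hK, hKnum, hGone, nsmul_eq_mul, smul_eq_mul]
  have hd0 : (0:ℝ) < D := by rw [hD]; positivity
  field_simp
  linear_combination ((d:ℝ) * Real.Gamma ((D + 2 * s)/2) * Real.Gamma ((d:ℝ)/2)) * hAval
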